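/- Suppose in addition that A₁ > 0 is a constant such that s^{β−1} E_{β,β}(λ s^β) ≤ (A₁/β) · λ₁^{(1−β)/β} · exp(B^{1/β} s) for every λ with λ₁ ≤ λ ≤ B and every s ∈ [0,a], where λ₁ is the first term of the sequence (λ_p). Then there exists a constant C > 0, depending only on K, a, A₁, λ₁, β and B, such that for every positive integer m, every v₁, v₂ ∈ C([0,a]; ℓ²) and every t ∈ [0,a], ‖F^m(v₁)(t) − F^m(v₂)(t)‖²_{ℓ²} ≤ C^m · (t^m / m!) · ‖v₁ − v₂‖²_C, where F^m denotes the m-fold iterate of F. In particular some iterate F^{m₀} is a strict contraction on C([0,a]; ℓ²). -/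

import Mathlib

open Real MeasureTheory

/-- The Mittag-Leffler function `E_{β,γ}(z) = ∑_{k=0}^∞ z^k / Γ(βk + γ)` for real `z`. -/
noncomputable def mittagLeffler (β γ z : ℝ) : ℝ :=
  ∑' k : ℕ, z ^ k / Real.Gamma (β * k + γ)

private lemma le_of_sq_le_sq'' {x y : ℝ} (hx : 0 ≤ x) (hy : 0 ≤ y) (h : x ^ 2 ≤ y ^ 2) :
    x ≤ y := by nlinarith

lemma ml_term_summable {β : ℝ} (hβ : 1 < β) (z : ℝ) :
    Summable (fun k : ℕ => z ^ k / Real.Gamma (β * k + β)) := by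
  rw [← summable_nat_add_iff 1]
  have hfac : Summable (fun k : ℕ => |z| ^ (k + 1) / (Nat.factorial (k+1) : ℝ)) :=
    (summable_nat_add_iff 1).2 (Real.summable_pow_div_factorial |z|)
  refine Summable.of_norm (Summable.of_nonneg_of_le (fun k => norm_nonneg _) (fun k => ?_) hfac)
  have hΓpos : 0 < Real.Gamma (β * ((k : ℝ) + 1) + β) := by
    apply Real.Gamma_pos_of_pos; nlinarith [Nat.cast_nonneg (α := ℝ) k]
  have hge : ((Nat.factorial (k+1) : ℕ) : ℝ) ≤ Real.Gamma (β * ((k : ℝ) + 1) + β) := by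
    rw [← Real.Gamma_nat_eq_factorial (k + 1)]
    apply Real.Gamma_strictMonoOn_Ici.monotoneOn
    · simp only [Set.mem_Ici]; push_cast; nlinarith [Nat.cast_nonneg (α := ℝ) k]
    · simp only [Set.mem_Ici]; nlinarith [Nat.cast_nonneg (α := ℝ) k]
    · push_cast; nlinarith [Nat.cast_nonneg (α := ℝ) k]
  push_cast
  rw [norm_div, Real.norm_eq_abs, Real.norm_eq_abs, abs_pow, abs_of_pos hΓpos]
  push_cast at hge
  apply div_le_div_of_nonneg_left (pow_nonneg (abs_nonneg z) _) _ hge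
  · positivity

lemma ml_measurable {β : ℝ} (hβ : 1 < β) : Measurable fun z => mittagLeffler β β z := by
  have hmeas : ∀ n : ℕ, Measurable (fun z : ℝ => ∑ k ∈ Finset.range n, z ^ k / Real.Gamma (β * k + β)) :=
    fun n => Finset.measurable_sum _ fun k _ => (measurable_id.pow_const k).div_const _
  apply measurable_of_tendsto_metrizable hmeas
  rw [tendsto_pi_nhds]
  intro z
  exact (ml_term_summable hβ z).hasSum.tendsto_sum_nat

lemma ml_nonneg {β : ℝ} (hβ : 0 < β) {z : ℝ} (hz : 0 ≤ z) : 0 ≤ mittagLeffler β β z :=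
  tsum_nonneg fun k => div_nonneg (pow_nonneg hz k)
    (Real.Gamma_pos_of_pos (by positivity)).le


set_option maxHeartbeats 1000000 in
/-- under the additional kernel bound
`s^{β−1} E_{β,β}(λ s^β) ≤ (A₁/β) λ₁^{(1−β)/β} exp(B^{1/β} s)` for `λ₁ ≤ λ ≤ B`, `s ∈ [0,a]`,
there is `C > 0` such that for every positive integer `m`, all `v₁, v₂ ∈ C([0,a];ℓ²)` and
`t ∈ [0,a]`, `‖F^m(v₁)(t) − F^m(v₂)(t)‖² ≤ C^m (t^m/m!) ‖v₁ − v₂‖²_C`; in particular some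
iterate `F^{m₀}` is a strict contraction. -/
theorem regularized_map_iterate_contraction
    (lam : ℕ+ → ℝ) (hlam_pos : ∀ p, 0 < lam p) (hlam_mono : Monotone lam)
    (hlam_tendsto : Filter.Tendsto lam Filter.atTop Filter.atTop)
    (β a B K A₁ : ℝ) (hβ1 : 1 < β) (hβ2 : β < 2) (ha : 0 < a) (hB : 0 < B) (hK : 0 < K)
    (hA₁ : 0 < A₁)
    (c0 c1 : lp (fun _ : ℕ+ => ℝ) 2)
    (G : ℝ → lp (fun _ : ℕ+ => ℝ) 2 → lp (fun _ : ℕ+ => ℝ) 2)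
    (hGcont : ContinuousOn (fun q : ℝ × lp (fun _ : ℕ+ => ℝ) 2 => G q.1 q.2)
      (Set.Icc (0 : ℝ) a ×ˢ Set.univ))
    (hGlip : ∀ t ∈ Set.Icc (0 : ℝ) a, ∀ v w : lp (fun _ : ℕ+ => ℝ) 2,
      ‖G t v - G t w‖ ≤ K * ‖v - w‖)
    (hA₁bound : ∀ l : ℝ, lam 1 ≤ l → l ≤ B → ∀ s ∈ Set.Icc (0 : ℝ) a,
      s ^ (β - 1) * mittagLeffler β β (l * s ^ β) ≤
        (A₁ / β) * lam 1 ^ ((1 - β) / β) * Real.exp (B ^ (1 / β) * s))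
    (F : C(Set.Icc (0 : ℝ) a, lp (fun _ : ℕ+ => ℝ) 2) →
         C(Set.Icc (0 : ℝ) a, lp (fun _ : ℕ+ => ℝ) 2))
    (hF : ∀ v : C(Set.Icc (0 : ℝ) a, lp (fun _ : ℕ+ => ℝ) 2),
      ∀ t : Set.Icc (0 : ℝ) a, ∀ p : ℕ+,
        (lam p ≤ B → F v t p =
          mittagLeffler β 1 (lam p * (t : ℝ) ^ β) * c0 p +
          (t : ℝ) * mittagLeffler β 2 (lam p * (t : ℝ) ^ β) * c1 p +
          ∫ η in (0 : ℝ)..(t : ℝ),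
            ((t : ℝ) - η) ^ (β - 1) * mittagLeffler β β (lam p * ((t : ℝ) - η) ^ β) *
              G η (v (Set.projIcc 0 a ha.le η)) p) ∧
        (B < lam p → F v t p = 0)) :
    ∃ C : ℝ, 0 < C ∧
      (∀ m : ℕ, 1 ≤ m → ∀ v₁ v₂ : C(Set.Icc (0 : ℝ) a, lp (fun _ : ℕ+ => ℝ) 2),
        ∀ t : Set.Icc (0 : ℝ) a,
          ‖(F^[m] v₁) t - (F^[m] v₂) t‖ ^ 2 ≤
            C ^ m * ((t : ℝ) ^ m / (Nat.factorial m)) * ‖v₁ - v₂‖ ^ 2) ∧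
      (∃ m₀ : ℕ, ∃ k : ℝ, 0 ≤ k ∧ k < 1 ∧
        ∀ v₁ v₂ : C(Set.Icc (0 : ℝ) a, lp (fun _ : ℕ+ => ℝ) 2),
          ‖F^[m₀] v₁ - F^[m₀] v₂‖ ≤ k * ‖v₁ - v₂‖) := by
  have hβ0 : (0 : ℝ) < β := by linarith
  -- finitely many relevant coordinates
  obtain ⟨N₀, hN₀⟩ := Filter.eventually_atTop.1
    (hlam_tendsto.eventually (Filter.eventually_gt_atTop B))
  set S : Finset ℕ+ := Finset.Icc 1 N₀ with hS
  have hSc : ∀ p : ℕ+, p ∉ S → B < lam p := by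
    intro p hp
    simp only [hS, Finset.mem_Icc, not_and] at hp
    exact hN₀ p (not_le.1 (hp p.one_le)).le
  -- the uniform kernel bound
  set M : ℝ := (A₁ / β) * lam 1 ^ ((1 - β) / β) * Real.exp (B ^ (1 / β) * a) with hM
  have hM0 : 0 < M := by
    have h1 : (0 : ℝ) < lam 1 ^ ((1 - β) / β) := Real.rpow_pos_of_pos (hlam_pos 1) _
    have h2 : (0 : ℝ) < Real.exp (B ^ (1 / β) * a) := Real.exp_pos _
    positivity
  have hker : ∀ p : ℕ+, lam p ≤ B → ∀ s ∈ Set.Icc (0 : ℝ) a,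
      s ^ (β - 1) * mittagLeffler β β (lam p * s ^ β) ≤ M := by
    intro p hpB s hs
    refine (hA₁bound (lam p) (hlam_mono p.one_le) hpB s hs).trans ?_
    rw [hM]
    have h1 : Real.exp (B ^ (1 / β) * s) ≤ Real.exp (B ^ (1 / β) * a) :=
      Real.exp_le_exp.2 (mul_le_mul_of_nonneg_left hs.2 (Real.rpow_nonneg hB.le _))
    have h2 : (0 : ℝ) ≤ (A₁ / β) * lam 1 ^ ((1 - β) / β) := by
      have := Real.rpow_pos_of_pos (hlam_pos 1) ((1 - β) / β)
      positivity
    exact mul_le_mul_of_nonneg_left h1 h2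
  have hker0 : ∀ p : ℕ+, ∀ s : ℝ, 0 ≤ s →
      0 ≤ s ^ (β - 1) * mittagLeffler β β (lam p * s ^ β) := by
    intro p s hs
    exact mul_nonneg (Real.rpow_nonneg hs _)
      (ml_nonneg hβ0 (mul_nonneg (hlam_pos p).le (Real.rpow_nonneg hs _)))
  -- coordinate evaluation is continuous
  have hEval : ∀ p : ℕ+, Continuous (fun x : lp (fun _ : ℕ+ => ℝ) 2 => x p) := by
    intro p
    refine (LipschitzWith.of_dist_le_mul (K := 1) fun x y => ?_).continuous
    rw [dist_eq_norm, dist_eq_norm]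
    simp only [NNReal.coe_one, one_mul]
    calc ‖x p - y p‖ = ‖(x - y) p‖ := by rw [lp.coeFn_sub, Pi.sub_apply]
      _ ≤ ‖x - y‖ := lp.norm_apply_le_norm (by norm_num) _ p
  -- continuity of the composed nonlinearity
  have hcont_gw : ∀ w : C(Set.Icc (0 : ℝ) a, lp (fun _ : ℕ+ => ℝ) 2),
      ContinuousOn (fun η : ℝ => G η (w (Set.projIcc 0 a ha.le η))) (Set.Icc 0 a) := by
    intro w
    have h1 : Continuous (fun η : ℝ =>
        ((η, w (Set.projIcc 0 a ha.le η)) : ℝ × lp (fun _ : ℕ+ => ℝ) 2)) :=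
      continuous_id.prodMk (w.continuous.comp continuous_projIcc)
    exact hGcont.comp h1.continuousOn fun η hη => ⟨hη, Set.mem_univ _⟩
  set L : ℝ := Real.sqrt (S.card : ℝ) * M * K with hLdef
  have hL0 : 0 ≤ L := by positivity
  -- single-step estimate
  have hstep : ∀ w₁ w₂ : C(Set.Icc (0 : ℝ) a, lp (fun _ : ℕ+ => ℝ) 2),
      ∀ t : Set.Icc (0 : ℝ) a,
      ‖F w₁ t - F w₂ t‖ ≤ L * ∫ η in (0 : ℝ)..(t : ℝ),
        ‖w₁ (Set.projIcc 0 a ha.le η) - w₂ (Set.projIcc 0 a ha.le η)‖ := by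
    intro w₁ w₂ t
    set I : ℝ := ∫ η in (0 : ℝ)..(t : ℝ),
        ‖w₁ (Set.projIcc 0 a ha.le η) - w₂ (Set.projIcc 0 a ha.le η)‖ with hIdef
    have hψcont : Continuous fun η : ℝ =>
        ‖w₁ (Set.projIcc 0 a ha.le η) - w₂ (Set.projIcc 0 a ha.le η)‖ :=
      ((w₁.continuous.comp continuous_projIcc).sub (w₂.continuous.comp continuous_projIcc)).norm
    have hI0 : 0 ≤ I :=
      intervalIntegral.integral_nonneg t.2.1 fun η _ => norm_nonneg _
    have hIocIcc : Set.Ioc (0:ℝ) (t:ℝ) ⊆ Set.Icc (0:ℝ) a :=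
      fun η hη => ⟨hη.1.le, hη.2.trans t.2.2⟩
    have hκ0 : ∀ p : ℕ+, ∀ η ∈ Set.Icc (0:ℝ) (t:ℝ),
        0 ≤ ((t:ℝ) - η) ^ (β - 1) * mittagLeffler β β (lam p * ((t:ℝ) - η) ^ β) :=
      fun p η hη => hker0 p _ (sub_nonneg.2 hη.2)
    have hκle : ∀ p : ℕ+, lam p ≤ B → ∀ η ∈ Set.Icc (0:ℝ) (t:ℝ),
        ((t:ℝ) - η) ^ (β - 1) * mittagLeffler β β (lam p * ((t:ℝ) - η) ^ β) ≤ M := by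
      intro p hpB η hη
      exact hker p hpB _ ⟨sub_nonneg.2 hη.2, by
        have := t.2.2; have := hη.1; linarith⟩
    have hint : ∀ p : ℕ+, lam p ≤ B → ∀ w : C(Set.Icc (0:ℝ) a, lp (fun _ : ℕ+ => ℝ) 2),
        IntervalIntegrable (fun η : ℝ =>
          ((t:ℝ) - η) ^ (β - 1) * mittagLeffler β β (lam p * ((t:ℝ) - η) ^ β) *
            (G η (w (Set.projIcc 0 a ha.le η)) p)) volume 0 (t:ℝ) := by
      intro p hpB w
      obtain ⟨Cw, hCw⟩ := isCompact_Icc.exists_bound_of_continuousOn (hcont_gw w)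
      have hsubc : Continuous fun η : ℝ => (t:ℝ) - η := continuous_const.sub continuous_id
      have hκmeas : Measurable fun η : ℝ =>
          ((t:ℝ) - η) ^ (β - 1) * mittagLeffler β β (lam p * ((t:ℝ) - η) ^ β) := by
        have h1 : Measurable fun η : ℝ => ((t:ℝ) - η) ^ (β - 1) :=
          ((Real.continuous_rpow_const (by linarith)).comp hsubc).measurable
        have h2 : Measurable fun η : ℝ => lam p * ((t:ℝ) - η) ^ β :=
          (((Real.continuous_rpow_const (by linarith)).comp hsubc).measurable).const_mul _
        exact h1.mul ((ml_measurable hβ1).comp h2)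
      rw [intervalIntegrable_iff, Set.uIoc_of_le t.2.1]
      apply MeasureTheory.Integrable.mono' (g := fun _ : ℝ => (M + 1) * (Cw + 1))
        (integrableOn_const measure_Ioc_lt_top.ne)
      · have hgc : ContinuousOn (fun η : ℝ =>
            (G η (w (Set.projIcc 0 a ha.le η)) p : ℝ)) (Set.Icc (0:ℝ) a) :=
          (hEval p).comp_continuousOn (hcont_gw w)
        exact (hκmeas.aestronglyMeasurable).mul
          ((hgc.mono hIocIcc).aestronglyMeasurable measurableSet_Ioc)
      · refine (ae_restrict_iff' measurableSet_Ioc).2 (ae_of_all _ fun η hη => ?_)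
        have hηt : η ∈ Set.Icc (0:ℝ) (t:ℝ) := ⟨hη.1.le, hη.2⟩
        have hηa : η ∈ Set.Icc (0:ℝ) a := hIocIcc hη
        have hb1 : |((t:ℝ) - η) ^ (β - 1) * mittagLeffler β β (lam p * ((t:ℝ) - η) ^ β)|
            ≤ M + 1 := by
          rw [abs_of_nonneg (hκ0 p η hηt)]
          exact (hκle p hpB η hηt).trans (by linarith)
        have hb2 : |(G η (w (Set.projIcc 0 a ha.le η)) p : ℝ)| ≤ Cw + 1 := by
          calc |(G η (w (Set.projIcc 0 a ha.le η)) p : ℝ)|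
              = ‖(G η (w (Set.projIcc 0 a ha.le η)) p : ℝ)‖ := (Real.norm_eq_abs _).symm
            _ ≤ ‖G η (w (Set.projIcc 0 a ha.le η))‖ :=
                lp.norm_apply_le_norm (by norm_num) _ p
            _ ≤ Cw := hCw η hηa
            _ ≤ Cw + 1 := by linarith
        calc ‖((t:ℝ) - η) ^ (β - 1) * mittagLeffler β β (lam p * ((t:ℝ) - η) ^ β) *
              (G η (w (Set.projIcc 0 a ha.le η)) p)‖
            = |((t:ℝ) - η) ^ (β - 1) * mittagLeffler β β (lam p * ((t:ℝ) - η) ^ β)| *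
              |(G η (w (Set.projIcc 0 a ha.le η)) p : ℝ)| := by
              rw [Real.norm_eq_abs, abs_mul]
          _ ≤ (M + 1) * (Cw + 1) := by
              apply mul_le_mul hb1 hb2 (abs_nonneg _) (by linarith)
    have hcoord : ∀ p : ℕ+, |((F w₁ t) p : ℝ) - (F w₂ t) p| ≤ M * K * I := by
      intro p
      rcases le_or_gt (lam p) B with hpB | hpB
      · have key : ((F w₁ t) p : ℝ) - (F w₂ t) p = ∫ η in (0:ℝ)..(t:ℝ),
            ((t:ℝ) - η) ^ (β - 1) * mittagLeffler β β (lam p * ((t:ℝ) - η) ^ β) *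
              ((G η (w₁ (Set.projIcc 0 a ha.le η)) p : ℝ) -
               (G η (w₂ (Set.projIcc 0 a ha.le η)) p : ℝ)) := by
          have h3 : (∫ η in (0:ℝ)..(t:ℝ),
              ((t:ℝ) - η) ^ (β - 1) * mittagLeffler β β (lam p * ((t:ℝ) - η) ^ β) *
                ((G η (w₁ (Set.projIcc 0 a ha.le η)) p : ℝ) -
                 (G η (w₂ (Set.projIcc 0 a ha.le η)) p : ℝ)))
              = (∫ η in (0:ℝ)..(t:ℝ),
              ((t:ℝ) - η) ^ (β - 1) * mittagLeffler β β (lam p * ((t:ℝ) - η) ^ β) *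
                (G η (w₁ (Set.projIcc 0 a ha.le η)) p : ℝ))
              - ∫ η in (0:ℝ)..(t:ℝ),
              ((t:ℝ) - η) ^ (β - 1) * mittagLeffler β β (lam p * ((t:ℝ) - η) ^ β) *
                (G η (w₂ (Set.projIcc 0 a ha.le η)) p : ℝ) := by
            rw [← intervalIntegral.integral_sub (hint p hpB w₁) (hint p hpB w₂)]
            exact intervalIntegral.integral_congr fun η _ => mul_sub _ _ _
          rw [(hF w₁ t p).1 hpB, (hF w₂ t p).1 hpB, h3]; ring
        rw [key]
        have hintd : IntervalIntegrable (fun η : ℝ =>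
            ((t:ℝ) - η) ^ (β - 1) * mittagLeffler β β (lam p * ((t:ℝ) - η) ^ β) *
              ((G η (w₁ (Set.projIcc 0 a ha.le η)) p : ℝ) -
               (G η (w₂ (Set.projIcc 0 a ha.le η)) p : ℝ))) volume 0 (t:ℝ) := by
          have heq : (fun η : ℝ =>
              ((t:ℝ) - η) ^ (β - 1) * mittagLeffler β β (lam p * ((t:ℝ) - η) ^ β) *
                ((G η (w₁ (Set.projIcc 0 a ha.le η)) p : ℝ) -
                 (G η (w₂ (Set.projIcc 0 a ha.le η)) p : ℝ)))
              = (fun η : ℝ =>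
              (((t:ℝ) - η) ^ (β - 1) * mittagLeffler β β (lam p * ((t:ℝ) - η) ^ β) *
                (G η (w₁ (Set.projIcc 0 a ha.le η)) p : ℝ)) -
              (((t:ℝ) - η) ^ (β - 1) * mittagLeffler β β (lam p * ((t:ℝ) - η) ^ β) *
                (G η (w₂ (Set.projIcc 0 a ha.le η)) p : ℝ))) := by
            funext η; ring
          rw [heq]
          exact (hint p hpB w₁).sub (hint p hpB w₂)
        refine (intervalIntegral.abs_integral_le_integral_abs t.2.1).trans ?_
        have hmono2 : (∫ η in (0:ℝ)..(t:ℝ),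
            |((t:ℝ) - η) ^ (β - 1) * mittagLeffler β β (lam p * ((t:ℝ) - η) ^ β) *
              ((G η (w₁ (Set.projIcc 0 a ha.le η)) p : ℝ) -
               (G η (w₂ (Set.projIcc 0 a ha.le η)) p : ℝ))|)
            ≤ ∫ η in (0:ℝ)..(t:ℝ), M * K *
              ‖w₁ (Set.projIcc 0 a ha.le η) - w₂ (Set.projIcc 0 a ha.le η)‖ := by
          refine intervalIntegral.integral_mono_on t.2.1 hintd.abs
            ((continuous_const.mul hψcont).intervalIntegrable _ _) fun η hη => ?_
          have hηa : η ∈ Set.Icc (0:ℝ) a := ⟨hη.1, hη.2.trans t.2.2⟩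
          have hd : |(G η (w₁ (Set.projIcc 0 a ha.le η)) p : ℝ) -
               (G η (w₂ (Set.projIcc 0 a ha.le η)) p : ℝ)|
              ≤ K * ‖w₁ (Set.projIcc 0 a ha.le η) - w₂ (Set.projIcc 0 a ha.le η)‖ := by
            calc |(G η (w₁ (Set.projIcc 0 a ha.le η)) p : ℝ) -
                 (G η (w₂ (Set.projIcc 0 a ha.le η)) p : ℝ)|
                = ‖(G η (w₁ (Set.projIcc 0 a ha.le η)) -
                    G η (w₂ (Set.projIcc 0 a ha.le η))) p‖ := by
                  rw [lp.coeFn_sub, Pi.sub_apply, Real.norm_eq_abs]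
              _ ≤ ‖G η (w₁ (Set.projIcc 0 a ha.le η)) -
                    G η (w₂ (Set.projIcc 0 a ha.le η))‖ :=
                  lp.norm_apply_le_norm (by norm_num) _ p
              _ ≤ K * ‖w₁ (Set.projIcc 0 a ha.le η) - w₂ (Set.projIcc 0 a ha.le η)‖ :=
                  hGlip η hηa _ _
          calc |((t:ℝ) - η) ^ (β - 1) * mittagLeffler β β (lam p * ((t:ℝ) - η) ^ β) *
              ((G η (w₁ (Set.projIcc 0 a ha.le η)) p : ℝ) -
               (G η (w₂ (Set.projIcc 0 a ha.le η)) p : ℝ))|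
              = (((t:ℝ) - η) ^ (β - 1) * mittagLeffler β β (lam p * ((t:ℝ) - η) ^ β)) *
                |(G η (w₁ (Set.projIcc 0 a ha.le η)) p : ℝ) -
                 (G η (w₂ (Set.projIcc 0 a ha.le η)) p : ℝ)| := by
                rw [abs_mul, abs_of_nonneg (hκ0 p η hη)]
            _ ≤ M * (K * ‖w₁ (Set.projIcc 0 a ha.le η) - w₂ (Set.projIcc 0 a ha.le η)‖) :=
                mul_le_mul (hκle p hpB η hη) hd (abs_nonneg _) hM0.le
            _ = M * K * ‖w₁ (Set.projIcc 0 a ha.le η) - w₂ (Set.projIcc 0 a ha.le η)‖ := by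
                ring
        refine hmono2.trans ?_
        have : (fun η : ℝ => M * K *
              ‖w₁ (Set.projIcc 0 a ha.le η) - w₂ (Set.projIcc 0 a ha.le η)‖)
            = fun η : ℝ => (M * K) *
              ‖w₁ (Set.projIcc 0 a ha.le η) - w₂ (Set.projIcc 0 a ha.le η)‖ := rfl
        rw [this, intervalIntegral.integral_const_mul]
      · rw [(hF w₁ t p).2 hpB, (hF w₂ t p).2 hpB]
        simp only [sub_zero, abs_zero]
        positivity
    have h2e : ((2:ENNReal)).toReal = ((2:ℕ):ℝ) := by norm_num
    have h2pow : ∀ y : ℝ, y ^ ((2:ENNReal).toReal) = y ^ (2:ℕ) := fun y => by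
      rw [h2e, Real.rpow_natCast]
    have hx2 : ‖F w₁ t - F w₂ t‖ ^ (2:ℕ) = ∑' p : ℕ+, ‖(F w₁ t - F w₂ t) p‖ ^ (2:ℕ) := by
      have h := lp.norm_rpow_eq_tsum (p := 2)
        (by norm_num : 0 < (2:ENNReal).toReal) (F w₁ t - F w₂ t)
      simpa only [h2pow] using h
    have hsum : ∑' p : ℕ+, ‖(F w₁ t - F w₂ t) p‖ ^ (2:ℕ)
        = ∑ p ∈ S, ‖(F w₁ t - F w₂ t) p‖ ^ (2:ℕ) := by
      refine tsum_eq_sum fun p hp => ?_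
      have h1 := (hF w₁ t p).2 (hSc p hp)
      have h2 := (hF w₂ t p).2 (hSc p hp)
      simp [lp.coeFn_sub, Pi.sub_apply, h1, h2]
    have hfin : ∑ p ∈ S, ‖(F w₁ t - F w₂ t) p‖ ^ (2:ℕ)
        ≤ (S.card : ℝ) * (M * K * I) ^ (2:ℕ) := by
      have h := Finset.sum_le_card_nsmul S (fun p => ‖(F w₁ t - F w₂ t) p‖ ^ (2:ℕ))
        ((M * K * I) ^ (2:ℕ)) fun p _ => by
          have h1 : ‖(F w₁ t - F w₂ t) p‖ ≤ M * K * I := by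
            rw [lp.coeFn_sub, Pi.sub_apply, Real.norm_eq_abs]
            exact hcoord p
          exact pow_le_pow_left₀ (norm_nonneg _) h1 2
      simpa [nsmul_eq_mul] using h
    have hLI : ‖F w₁ t - F w₂ t‖ ^ (2:ℕ) ≤ (L * I) ^ (2:ℕ) := by
      have hLsq : (L * I) ^ (2:ℕ) = (S.card : ℝ) * (M * K * I) ^ (2:ℕ) := by
        rw [hLdef, show (Real.sqrt (S.card:ℝ) * M * K * I) ^ (2:ℕ)
            = (Real.sqrt (S.card:ℝ)) ^ (2:ℕ) * (M * K * I) ^ (2:ℕ) from by ring,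
          Real.sq_sqrt (Nat.cast_nonneg _)]
      rw [hx2, hsum, hLsq]
      exact hfin
    exact le_of_sq_le_sq'' (norm_nonneg _) (mul_nonneg hL0 hI0) hLI
  -- main induction
  have hiter : ∀ v₁ v₂ : C(Set.Icc (0 : ℝ) a, lp (fun _ : ℕ+ => ℝ) 2), ∀ m : ℕ,
      ∀ t : Set.Icc (0 : ℝ) a,
      ‖F^[m] v₁ t - F^[m] v₂ t‖ ≤ L ^ m * (t : ℝ) ^ m / (Nat.factorial m) * ‖v₁ - v₂‖ := by
    intro v₁ v₂ m
    induction m with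
    | zero =>
      intro t
      simpa using ContinuousMap.norm_coe_le_norm (v₁ - v₂) t
    | succ m ih =>
      intro t
      rw [Function.iterate_succ_apply', Function.iterate_succ_apply']
      refine le_trans (hstep _ _ t) ?_
      have hint1 : IntervalIntegrable (fun η : ℝ =>
          ‖F^[m] v₁ (Set.projIcc 0 a ha.le η) - F^[m] v₂ (Set.projIcc 0 a ha.le η)‖)
          volume 0 (t : ℝ) :=
        (((F^[m] v₁).continuous.comp continuous_projIcc).sub
          ((F^[m] v₂).continuous.comp continuous_projIcc)).norm.intervalIntegrable _ _
      have hint2 : IntervalIntegrable (fun η : ℝ =>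
          L ^ m * η ^ m / (Nat.factorial m) * ‖v₁ - v₂‖) volume 0 (t : ℝ) :=
        (((continuous_const.mul (continuous_pow m)).div_const _).mul continuous_const).intervalIntegrable _ _
      have hmono : (∫ η in (0 : ℝ)..(t : ℝ),
          ‖F^[m] v₁ (Set.projIcc 0 a ha.le η) - F^[m] v₂ (Set.projIcc 0 a ha.le η)‖)
          ≤ ∫ η in (0 : ℝ)..(t : ℝ), L ^ m * η ^ m / (Nat.factorial m) * ‖v₁ - v₂‖ := by
        refine intervalIntegral.integral_mono_on t.2.1 hint1 hint2 fun η hη => ?_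
        have hmem : η ∈ Set.Icc (0 : ℝ) a := ⟨hη.1, hη.2.trans t.2.2⟩
        have h2 := ih ⟨η, hmem⟩
        rwa [Set.projIcc_of_mem ha.le hmem]
      have hcalc : (∫ η in (0 : ℝ)..(t : ℝ), L ^ m * η ^ m / (Nat.factorial m) * ‖v₁ - v₂‖)
          = L ^ m * (t : ℝ) ^ (m + 1) / ((Nat.factorial m) * (m + 1)) * ‖v₁ - v₂‖ := by
        have h1 : (fun η : ℝ => L ^ m * η ^ m / (Nat.factorial m) * ‖v₁ - v₂‖)
            = fun η : ℝ => (L ^ m / (Nat.factorial m) * ‖v₁ - v₂‖) * η ^ m := by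
          funext η; ring
        rw [h1, intervalIntegral.integral_const_mul, integral_pow]
        rw [zero_pow (Nat.succ_ne_zero m)]
        have hf : ((Nat.factorial m : ℝ)) ≠ 0 := Nat.cast_ne_zero.2 (Nat.factorial_ne_zero m)
        have hm1 : ((m : ℝ) + 1) ≠ 0 := by positivity
        field_simp
        ring
      calc L * ∫ η in (0 : ℝ)..(t : ℝ),
            ‖F^[m] v₁ (Set.projIcc 0 a ha.le η) - F^[m] v₂ (Set.projIcc 0 a ha.le η)‖
          ≤ L * (L ^ m * (t : ℝ) ^ (m + 1) / ((Nat.factorial m) * (m + 1)) * ‖v₁ - v₂‖) := by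
            rw [← hcalc]; exact mul_le_mul_of_nonneg_left hmono hL0
        _ = L ^ (m + 1) * (t : ℝ) ^ (m + 1) / (Nat.factorial (m + 1)) * ‖v₁ - v₂‖ := by
            have hf : ((Nat.factorial m : ℝ)) ≠ 0 := Nat.cast_ne_zero.2 (Nat.factorial_ne_zero m)
            have hm1 : ((m : ℝ) + 1) ≠ 0 := by positivity
            rw [Nat.factorial_succ]; push_cast; field_simp; ring
  refine ⟨max (L ^ 2 * a) 1, lt_of_lt_of_le one_pos (le_max_right _ _), ?_, ?_⟩
  case _ =>
    intro m _ v₁ v₂ t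
    have h := hiter v₁ v₂ m t
    have h2 : ‖F^[m] v₁ t - F^[m] v₂ t‖ ^ 2
        ≤ (L ^ m * (t : ℝ) ^ m / (Nat.factorial m) * ‖v₁ - v₂‖) ^ 2 :=
      pow_le_pow_left₀ (norm_nonneg _) h 2
    refine h2.trans ?_
    have hT0 : (0:ℝ) ≤ (t : ℝ) ^ m := pow_nonneg t.2.1 m
    have hTa : (t : ℝ) ^ m ≤ a ^ m := pow_le_pow_left₀ t.2.1 t.2.2 m
    have hf1 : (1:ℝ) ≤ (Nat.factorial m : ℝ) := Nat.one_le_cast.2 (Nat.factorial_pos m)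
    have hf0 : (0:ℝ) < (Nat.factorial m : ℝ) := by linarith
    have hL2a0 : (0:ℝ) ≤ L ^ 2 * a := mul_nonneg (sq_nonneg L) ha.le
    have e : (L ^ m * (t : ℝ) ^ m / (Nat.factorial m) * ‖v₁ - v₂‖) ^ 2
        = ((L ^ 2) ^ m * ((t : ℝ) ^ m) ^ 2 / ((Nat.factorial m : ℝ)) ^ 2) * ‖v₁ - v₂‖ ^ 2 := by
      ring
    rw [e]
    have c1 : (L ^ 2) ^ m * ((t : ℝ) ^ m) ^ 2 ≤ (max (L ^ 2 * a) 1) ^ m * (t : ℝ) ^ m := by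
      calc (L ^ 2) ^ m * ((t : ℝ) ^ m) ^ 2 = ((L ^ 2) ^ m * (t : ℝ) ^ m) * (t : ℝ) ^ m := by ring
        _ ≤ ((L ^ 2) ^ m * a ^ m) * (t : ℝ) ^ m :=
            mul_le_mul_of_nonneg_right
              (mul_le_mul_of_nonneg_left hTa (pow_nonneg (sq_nonneg L) m)) hT0
        _ = (L ^ 2 * a) ^ m * (t : ℝ) ^ m := by ring
        _ ≤ (max (L ^ 2 * a) 1) ^ m * (t : ℝ) ^ m :=
            mul_le_mul_of_nonneg_right (pow_le_pow_left₀ hL2a0 (le_max_left _ _) m) hT0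
    have h4 : (L ^ 2) ^ m * ((t : ℝ) ^ m) ^ 2 / ((Nat.factorial m : ℝ)) ^ 2
        ≤ (max (L ^ 2 * a) 1) ^ m * ((t : ℝ) ^ m / (Nat.factorial m : ℝ)) := by
      calc (L ^ 2) ^ m * ((t : ℝ) ^ m) ^ 2 / ((Nat.factorial m : ℝ)) ^ 2
          ≤ (L ^ 2) ^ m * ((t : ℝ) ^ m) ^ 2 / (Nat.factorial m : ℝ) := by
            apply div_le_div_of_nonneg_left (mul_nonneg (pow_nonneg (sq_nonneg L) m) (sq_nonneg _)) hf0
            nlinarith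
        _ ≤ ((max (L ^ 2 * a) 1) ^ m * (t : ℝ) ^ m) / (Nat.factorial m : ℝ) :=
            (div_le_div_iff_of_pos_right hf0).2 c1
        _ = (max (L ^ 2 * a) 1) ^ m * ((t : ℝ) ^ m / (Nat.factorial m : ℝ)) :=
            mul_div_assoc _ _ _
    exact mul_le_mul_of_nonneg_right h4 (sq_nonneg _)
  case _ =>
    have hC0 : (0:ℝ) < max (L ^ 2 * a) 1 := lt_of_lt_of_le one_pos (le_max_right _ _)
    have htend := FloorSemiring.tendsto_pow_div_factorial_atTop (K := ℝ) (max (L ^ 2 * a) 1 * a)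
    have hev : ∀ᶠ n : ℕ in Filter.atTop,
        (max (L ^ 2 * a) 1 * a) ^ n / (Nat.factorial n : ℝ) < 1 :=
      Filter.Tendsto.eventually_lt_const zero_lt_one htend
    obtain ⟨m₀, hm₀⟩ := (hev.and (Filter.eventually_ge_atTop 1)).exists
    have hx0 : (0:ℝ) ≤ (max (L ^ 2 * a) 1 * a) ^ m₀ / (Nat.factorial m₀ : ℝ) := by
      have h1 : (0:ℝ) < (Nat.factorial m₀ : ℝ) := Nat.cast_pos.2 (Nat.factorial_pos m₀)
      have h2 : (0:ℝ) ≤ max (L ^ 2 * a) 1 * a := le_of_lt (mul_pos hC0 ha)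
      exact div_nonneg (pow_nonneg h2 _) h1.le
    set k : ℝ := Real.sqrt ((max (L ^ 2 * a) 1 * a) ^ m₀ / (Nat.factorial m₀ : ℝ)) with hkdef
    have hk0 : 0 ≤ k := Real.sqrt_nonneg _
    have hksq : k ^ 2 = (max (L ^ 2 * a) 1 * a) ^ m₀ / (Nat.factorial m₀ : ℝ) :=
      Real.sq_sqrt hx0
    have hk1 : k < 1 := by nlinarith [hm₀.1]
    refine ⟨m₀, k, hk0, hk1, fun v₁ v₂ => ?_⟩
    rw [ContinuousMap.norm_le _ (mul_nonneg hk0 (norm_nonneg _))]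
    intro t
    rw [ContinuousMap.sub_apply]
    apply le_of_sq_le_sq'' (norm_nonneg _) (mul_nonneg hk0 (norm_nonneg _))
    have hb := hiter v₁ v₂ m₀ t
    have h2 : ‖F^[m₀] v₁ t - F^[m₀] v₂ t‖ ^ 2
        ≤ (L ^ m₀ * (t : ℝ) ^ m₀ / (Nat.factorial m₀ : ℝ) * ‖v₁ - v₂‖) ^ 2 :=
      pow_le_pow_left₀ (norm_nonneg _) hb 2
    refine h2.trans ?_
    have hf0 : (0:ℝ) < (Nat.factorial m₀ : ℝ) := Nat.cast_pos.2 (Nat.factorial_pos m₀)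
    have hf1 : (1:ℝ) ≤ (Nat.factorial m₀ : ℝ) := Nat.one_le_cast.2 (Nat.factorial_pos m₀)
    have hT0 : (0:ℝ) ≤ (t : ℝ) ^ m₀ := pow_nonneg t.2.1 m₀
    have hTa : (t : ℝ) ^ m₀ ≤ a ^ m₀ := pow_le_pow_left₀ t.2.1 t.2.2 m₀
    have hLm : (0:ℝ) ≤ (L ^ 2) ^ m₀ := pow_nonneg (sq_nonneg L) m₀
    have hCm : (0:ℝ) ≤ (max (L ^ 2 * a) 1) ^ m₀ := pow_nonneg hC0.le m₀
    have e : (L ^ m₀ * (t : ℝ) ^ m₀ / (Nat.factorial m₀ : ℝ) * ‖v₁ - v₂‖) ^ 2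
        = ((L ^ 2) ^ m₀ * ((t : ℝ) ^ m₀) ^ 2 / ((Nat.factorial m₀ : ℝ)) ^ 2) * ‖v₁ - v₂‖ ^ 2 := by
      ring
    have e2 : (k * ‖v₁ - v₂‖) ^ 2
        = ((max (L ^ 2 * a) 1 * a) ^ m₀ / (Nat.factorial m₀ : ℝ)) * ‖v₁ - v₂‖ ^ 2 := by
      rw [mul_pow, hksq]
    rw [e, e2]
    refine mul_le_mul_of_nonneg_right ?_ (sq_nonneg _)
    have c1 : (L ^ 2) ^ m₀ * ((t : ℝ) ^ m₀) ^ 2 ≤ (max (L ^ 2 * a) 1 * a) ^ m₀ := by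
      have h1 : (L ^ 2) ^ m₀ * ((t : ℝ) ^ m₀) ^ 2 ≤ (L ^ 2) ^ m₀ * (a ^ m₀) ^ 2 := by
        apply mul_le_mul_of_nonneg_left _ hLm
        have := pow_le_pow_left₀ hT0 hTa 2
        exact this
      refine h1.trans ?_
      have h2 : (L ^ 2) ^ m₀ * (a ^ m₀) ^ 2 = (L ^ 2 * a) ^ m₀ * a ^ m₀ := by ring
      rw [h2]
      calc (L ^ 2 * a) ^ m₀ * a ^ m₀
          ≤ (max (L ^ 2 * a) 1) ^ m₀ * a ^ m₀ :=
            mul_le_mul_of_nonneg_right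
              (pow_le_pow_left₀ (mul_nonneg (sq_nonneg L) ha.le) (le_max_left _ _) m₀)
              (pow_nonneg ha.le m₀)
        _ = (max (L ^ 2 * a) 1 * a) ^ m₀ := by ring
    calc (L ^ 2) ^ m₀ * ((t : ℝ) ^ m₀) ^ 2 / ((Nat.factorial m₀ : ℝ)) ^ 2
        ≤ (max (L ^ 2 * a) 1 * a) ^ m₀ / ((Nat.factorial m₀ : ℝ)) ^ 2 :=
          (div_le_div_iff_of_pos_right (by positivity)).2 c1
      _ ≤ (max (L ^ 2 * a) 1 * a) ^ m₀ / (Nat.factorial m₀ : ℝ) := by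
          apply div_le_div_of_nonneg_left (pow_nonneg (mul_nonneg hC0.le ha.le) m₀) hf0
          nlinarith
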